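/- Let n ≥ 1, let f : ℝ → ℝ be of class C^{n−1} with f^{(n−1)} Lipschitz with constant K ≥ 0, and let m₁, …, mₙ ∈ ℝ. Define g₁(t) = f(t + m₁) − f(t) and g_{k+1}(t) = g_k(t + m_{k+1}) − g_k(t). Then for each k with 1 ≤ k ≤ n, the function g_k is of class C^{n−k} and its (n−k)-th derivative satisfies |g_k^{(n−k)}(t)| ≤ K · |m₁| ⋯ |m_k| for all t ∈ ℝ. -/

import Mathlib

lemma my_iteratedDeriv_sub {n : ℕ} {f g : ℝ → ℝ} (hf : ContDiff ℝ n f) (hg : ContDiff ℝ n g)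
    (x : ℝ) :
    iteratedDeriv n (fun t => f t - g t) x = iteratedDeriv n f x - iteratedDeriv n g x := by
  have : (fun t => f t - g t) = f - g := rfl
  rw [this, ← iteratedDerivWithin_univ, ← iteratedDerivWithin_univ, ← iteratedDerivWithin_univ]
  exact iteratedDerivWithin_sub (Set.mem_univ x) uniqueDiffOn_univ hf.contDiffWithinAt hg.contDiffWithinAt

/-- Key step: differencing a `C^{r+1}` function whose `(r+1)`-st derivative is bounded by `C`
yields a `C^r` function whose `r`-th derivative is bounded by `C * |m|`. -/
lemma diff_step (r : ℕ) (h : ℝ → ℝ) (C : ℝ) (hh : ContDiff ℝ (r + 1 : ℕ) h)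
    (hb : ∀ t : ℝ, |iteratedDeriv (r + 1) h t| ≤ C) (m : ℝ) :
    ContDiff ℝ (r : ℕ) (fun t => h (t + m) - h t) ∧
      ∀ t : ℝ, |iteratedDeriv r (fun t => h (t + m) - h t) t| ≤ C * |m| := by
  have hshift : ContDiff ℝ (r + 1 : ℕ) (fun t => h (t + m)) :=
    hh.comp (contDiff_id.add contDiff_const)
  have hcd : ContDiff ℝ (r : ℕ) (fun t => h (t + m) - h t) :=
    (hshift.sub hh).of_le (by exact_mod_cast Nat.le_succ r)
  refine ⟨hcd, fun t => ?_⟩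
  have heq : iteratedDeriv r (fun t => h (t + m) - h t) t
      = iteratedDeriv r h (t + m) - iteratedDeriv r h t := by
    rw [my_iteratedDeriv_sub (hshift.of_le (by exact_mod_cast Nat.le_succ r))
      (hh.of_le (by exact_mod_cast Nat.le_succ r))]
    congr 1
    have := iteratedDeriv_comp_add_const r h m
    exact congrFun this t
  rw [heq]
  have hdiff : ∀ x : ℝ, DifferentiableAt ℝ (iteratedDeriv r h) x := fun x =>
    (hh.differentiable_iteratedDeriv r (by exact_mod_cast Nat.lt_succ_self r)).differentiableAt
  have hbound : ∀ x : ℝ, ‖deriv (iteratedDeriv r h) x‖ ≤ C := by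
    intro x
    rw [← iteratedDeriv_succ]
    simpa using hb x
  have := convex_univ.norm_image_sub_le_of_norm_deriv_le (f := iteratedDeriv r h)
    (fun x _ => hdiff x) (fun x _ => hbound x) (Set.mem_univ t) (Set.mem_univ (t + m))
  simpa using this

/-- If `f` is of class `C^{n-1}` with `f^{(n-1)}` Lipschitz with constant `K`, then the
`k`-th iterated forward difference `g_k` of `f` with steps `m₁,…,m_k` is of class `C^{n-k}`
and its `(n-k)`-th derivative is bounded by `K·|m₁|⋯|m_k|`. -/
theorem iterated_difference_deriv_bound (n : ℕ) (hn : 1 ≤ n)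
    (f : ℝ → ℝ) (K : ℝ) (hK : 0 ≤ K)
    (hf : ContDiff ℝ (n - 1 : ℕ) f)
    (hlip : ∀ s t : ℝ,
      |iteratedDeriv (n - 1) f s - iteratedDeriv (n - 1) f t| ≤ K * |s - t|)
    (m : ℕ → ℝ) (g : ℕ → ℝ → ℝ)
    (hg1 : ∀ t : ℝ, g 1 t = f (t + m 1) - f t)
    (hgk : ∀ k : ℕ, 1 ≤ k → k ≤ n - 1 → ∀ t : ℝ,
      g (k + 1) t = g k (t + m (k + 1)) - g k t)
    (k : ℕ) (hk1 : 1 ≤ k) (hkn : k ≤ n) :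
    ContDiff ℝ (n - k : ℕ) (g k) ∧
      ∀ t : ℝ, |iteratedDeriv (n - k) (g k) t| ≤ K * ∏ j ∈ Finset.Icc 1 k, |m j| := by
  induction k, hk1 using Nat.le_induction with
  | base =>
    have hge : g 1 = fun t => f (t + m 1) - f t := funext hg1
    have hshift : ContDiff ℝ (n - 1 : ℕ) (fun t => f (t + m 1)) :=
      hf.comp (contDiff_id.add contDiff_const)
    have hcd : ContDiff ℝ (n - 1 : ℕ) (g 1) := by
      rw [hge]; exact hshift.sub hf
    refine ⟨hcd, fun t => ?_⟩
    have heq : iteratedDeriv (n - 1) (g 1) t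
        = iteratedDeriv (n - 1) f (t + m 1) - iteratedDeriv (n - 1) f t := by
      rw [hge, my_iteratedDeriv_sub hshift hf]
      congr 1
      exact congrFun (iteratedDeriv_comp_add_const (n - 1) f (m 1)) t
    rw [heq]
    calc |iteratedDeriv (n - 1) f (t + m 1) - iteratedDeriv (n - 1) f t|
        ≤ K * |t + m 1 - t| := hlip _ _
      _ = K * ∏ j ∈ Finset.Icc 1 1, |m j| := by
          simp
  | succ k hk1 ih =>
    have hkn' : k ≤ n := le_of_lt (Nat.lt_of_succ_le hkn)
    obtain ⟨hcd, hbd⟩ := ih hkn'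
    have hge : g (k + 1) = fun t => g k (t + m (k + 1)) - g k t :=
      funext (hgk k hk1 (by omega))
    have hnk : n - k = (n - (k + 1)) + 1 := by omega
    rw [hnk] at hcd hbd
    have hCnonneg : 0 ≤ K * ∏ j ∈ Finset.Icc 1 k, |m j| :=
      mul_nonneg hK (Finset.prod_nonneg fun j _ => abs_nonneg _)
    obtain ⟨hcd', hbd'⟩ := diff_step (n - (k + 1)) (g k)
      (K * ∏ j ∈ Finset.Icc 1 k, |m j|) hcd hbd (m (k + 1))
    rw [← hge] at hcd' hbd'
    refine ⟨hcd', fun t => ?_⟩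
    calc |iteratedDeriv (n - (k + 1)) (g (k + 1)) t|
        ≤ (K * ∏ j ∈ Finset.Icc 1 k, |m j|) * |m (k + 1)| := hbd' t
      _ = K * ∏ j ∈ Finset.Icc 1 (k + 1), |m j| := by
          rw [Finset.prod_Icc_succ_top (by omega), mul_assoc]
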